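/- arXiv:2103.03235 — 3 statements merged into one kernel-verified Lean document; each statement's English description precedes it below -/
import Mathlib

section
/- Let Z be an n×K binary membership matrix (each row has exactly one entry equal to 1), with each column containing at least n_min ones, and let Π be a symmetric K×K real matrix. Then the K-th largest singular value of Z Π Z^T is at least n_min times the K-th largest singular value of Π. -/
open scoped Classical

/-- The `k`-th largest singular value of a real matrix, via the Courant–Fischer
min-max characterization: supremum over `k`-dimensional subspaces `V` of the
infimum of `‖M x‖` over unit vectors `x ∈ V`. -/
noncomputable def sval {m n : ℕ} (M : Matrix (Fin m) (Fin n) ℝ) (k : ℕ) : ℝ :=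
  ⨆ V : {V : Submodule ℝ (EuclideanSpace ℝ (Fin n)) // Module.finrank ℝ V = k},
    ⨅ x : {x : EuclideanSpace ℝ (Fin n) // x ∈ V.1 ∧ ‖x‖ = 1},
      ‖Matrix.toEuclideanLin M x.1‖

/-- `Z` is a 0/1 membership matrix: each row has exactly one entry equal to 1. -/
def IsMembership {n K : ℕ} (Z : Matrix (Fin n) (Fin K) ℝ) : Prop :=
  (∀ i k, Z i k = 0 ∨ Z i k = 1) ∧ ∀ i, ∃! k, Z i k = 1

/-- Size of community `k`: number of ones in column `k` of `Z`. -/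
noncomputable def commCard {n K : ℕ} (Z : Matrix (Fin n) (Fin K) ℝ) (k : Fin K) : ℕ :=
  (Finset.univ.filter fun i => Z i k = 1).card

private lemma enorm_eq {m : ℕ} (x : EuclideanSpace ℝ (Fin m)) :
    ‖x‖ = Real.sqrt (∑ i, (x i) ^ 2) := by
  rw [EuclideanSpace.norm_eq]
  congr 1
  exact Finset.sum_congr rfl fun i _ => by rw [Real.norm_eq_abs, sq_abs]

private lemma mulVec_apply' {a b : ℕ} (A : Matrix (Fin a) (Fin b) ℝ) (v : Fin b → ℝ)
    (i : Fin a) : A.mulVec v i = ∑ k, A i k * v k := by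
  simp [Matrix.mulVec, dotProduct]

private lemma toEuc_apply {a b : ℕ} (A : Matrix (Fin a) (Fin b) ℝ)
    (x : EuclideanSpace ℝ (Fin b)) (i : Fin a) :
    (Matrix.toEuclideanLin A x) i = ∑ k, A i k * x k := by
  rw [Matrix.toEuclideanLin_apply]
  simp [Matrix.mulVec, dotProduct]

private lemma sval_nonneg {m p : ℕ} (M : Matrix (Fin m) (Fin p) ℝ) (k : ℕ) :
    0 ≤ sval M k :=
  Real.iSup_nonneg fun _ => Real.iInf_nonneg fun _ => norm_nonneg _

set_option maxHeartbeats 1000000 in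
/-- Courant–Fischer at level `p` for a `p × p` matrix gives the least singular value bound. -/
private lemma sval_smul_le {p : ℕ} (M : Matrix (Fin p) (Fin p) ℝ)
    (y : EuclideanSpace ℝ (Fin p)) :
    sval M p * ‖y‖ ≤ ‖Matrix.toEuclideanLin M y‖ := by
  rcases eq_or_ne y 0 with rfl | hy
  · simp
  have hny : ‖y‖ ≠ 0 := norm_ne_zero_iff.mpr hy
  have hun : ‖(‖y‖⁻¹ • y : EuclideanSpace ℝ (Fin p))‖ = 1 := by
    rw [norm_smul, norm_inv, norm_norm, inv_mul_cancel₀ hny]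
  have key : sval M p ≤ ‖Matrix.toEuclideanLin M (‖y‖⁻¹ • y)‖ := by
    rw [sval]
    refine Real.iSup_le (fun V => ?_) (norm_nonneg _)
    show (⨅ x : {x : EuclideanSpace ℝ (Fin p) // x ∈ V.1 ∧ ‖x‖ = 1},
      ‖Matrix.toEuclideanLin M x.1‖) ≤ _
    have hVtop : V.1 = ⊤ :=
      Submodule.eq_top_of_finrank_eq (by rw [V.2, finrank_euclideanSpace_fin])
    have hmem : (‖y‖⁻¹ • y : EuclideanSpace ℝ (Fin p)) ∈ V.1 := by rw [hVtop]; trivial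
    have hbb : BddBelow (Set.range fun x : {x : EuclideanSpace ℝ (Fin p) //
        x ∈ V.1 ∧ ‖x‖ = 1} => ‖Matrix.toEuclideanLin M x.1‖) :=
      ⟨0, by rintro a ⟨z, rfl⟩; exact norm_nonneg _⟩
    exact ciInf_le hbb ⟨‖y‖⁻¹ • y, hmem, hun⟩
  have h2 : ‖Matrix.toEuclideanLin M (‖y‖⁻¹ • y)‖ * ‖y‖ = ‖Matrix.toEuclideanLin M y‖ := by
    rw [map_smul, norm_smul, norm_inv, norm_norm]
    field_simp
  calc sval M p * ‖y‖ ≤ ‖Matrix.toEuclideanLin M (‖y‖⁻¹ • y)‖ * ‖y‖ :=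
      mul_le_mul_of_nonneg_right key (norm_nonneg y)
    _ = _ := h2

set_option maxHeartbeats 1000000 in
theorem sval_membership_conjugation {n K : ℕ} (Z : Matrix (Fin n) (Fin K) ℝ)
    (Pm : Matrix (Fin K) (Fin K) ℝ) (nmin : ℕ)
    (hZ : IsMembership Z) (hsym : Pm.IsSymm)
    (hmin : ∀ k, nmin ≤ commCard Z k) (hpos : 0 < nmin) :
    (nmin : ℝ) * sval Pm K ≤ sval (Z * Pm * Z.transpose) K := by
  classical
  rcases Nat.eq_zero_or_pos K with hK0 | hK
  · subst hK0
    have h1 : sval Pm 0 ≤ 0 := by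
      rw [sval]
      refine Real.iSup_le (fun V => ?_) le_rfl
      haveI : Subsingleton (EuclideanSpace ℝ (Fin 0)) :=
        ⟨fun a b => PiLp.ext fun i => i.elim0⟩
      haveI : IsEmpty {x : EuclideanSpace ℝ (Fin 0) // x ∈ V.1 ∧ ‖x‖ = 1} := by
        refine ⟨fun x => ?_⟩
        have h0 : x.1 = 0 := Subsingleton.elim _ _
        have h1 := x.2.2
        rw [h0, norm_zero] at h1
        norm_num at h1
      rw [Real.iInf_of_isEmpty]
    calc (nmin : ℝ) * sval Pm 0 ≤ 0 :=
          mul_nonpos_of_nonneg_of_nonpos (by positivity) h1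
      _ ≤ _ := sval_nonneg _ _
  · obtain ⟨hZ01, hZex⟩ := hZ
    choose f hf1 hfu using hZex
    have hZd : ∀ i k, Z i k = if f i = k then 1 else 0 := by
      intro i k
      rcases hZ01 i k with h | h
      · rw [h]
        by_cases hik : f i = k
        · exfalso; rw [← hik, hf1 i] at h; norm_num at h
        · simp [hik]
      · rw [h, if_pos ((hfu i k h).symm)]
    have hmemf : ∀ i k, Z i k = 1 ↔ f i = k := by
      intro i k
      constructor
      · intro h; exact (hfu i k h).symm
      · intro h; rw [← h]; exact hf1 i
    have hcomm : ∀ k, commCard Z k = (Finset.univ.filter fun i => f i = k).card := by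
      intro k
      unfold commCard
      congr 1
      exact Finset.filter_congr fun i _ => by rw [hmemf]
    have hfiber : ∀ g : Fin K → ℝ, ∑ i, g (f i) = ∑ k, (commCard Z k : ℝ) * g k := by
      intro g
      rw [← Finset.sum_fiberwise Finset.univ f fun i => g (f i)]
      refine Finset.sum_congr rfl fun k _ => ?_
      rw [Finset.sum_congr rfl fun i hi => by rw [(Finset.mem_filter.mp hi).2],
        Finset.sum_const, hcomm k, nsmul_eq_mul]
    have hmv : ∀ (v : Fin K → ℝ) (i : Fin n), Z.mulVec v i = v (f i) := by
      intro v i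
      rw [mulVec_apply', Finset.sum_congr rfl fun k _ => by rw [hZd i k]]
      simp [ite_mul, Finset.sum_ite_eq]
    have hne : ∀ k : Fin K, ∃ i, f i = k := by
      intro k
      have h1 : 0 < commCard Z k := lt_of_lt_of_le hpos (hmin k)
      rw [hcomm k] at h1
      obtain ⟨i, hi⟩ := Finset.card_pos.mp h1
      exact ⟨i, (Finset.mem_filter.mp hi).2⟩
    set M := Z * Pm * Z.transpose with hM
    set σ := sval Pm K with hσ
    have hσ0 : 0 ≤ σ := sval_nonneg Pm K
    have hinj : Function.Injective (Matrix.toEuclideanLin Z) := by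
      rw [injective_iff_map_eq_zero]
      intro c hc
      have hci : ∀ i : Fin n, c (f i) = 0 := by
        intro i
        have h0 : (Matrix.toEuclideanLin Z c) i = 0 := by rw [hc]; rfl
        rw [toEuc_apply, ← mulVec_apply' Z (fun k => c k) i, hmv] at h0
        exact h0
      ext k
      obtain ⟨i, hi⟩ := hne k
      have := hci i
      rw [hi] at this
      simpa using this
    set V : Submodule ℝ (EuclideanSpace ℝ (Fin n)) :=
      LinearMap.range (Matrix.toEuclideanLin Z) with hV
    have hVr : Module.finrank ℝ V = K := by
      rw [hV, LinearMap.finrank_range_of_inj hinj, finrank_euclideanSpace_fin]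
    set T : EuclideanSpace ℝ (Fin n) →L[ℝ] EuclideanSpace ℝ (Fin n) :=
      LinearMap.toContinuousLinearMap (Matrix.toEuclideanLin M) with hT
    have hbdd : BddAbove (Set.range fun W : {W : Submodule ℝ (EuclideanSpace ℝ (Fin n)) //
        Module.finrank ℝ W = K} =>
        ⨅ x : {x : EuclideanSpace ℝ (Fin n) // x ∈ W.1 ∧ ‖x‖ = 1},
          ‖Matrix.toEuclideanLin M x.1‖) := by
      refine ⟨‖T‖, ?_⟩
      rintro a ⟨W, rfl⟩
      show (⨅ x : {x : EuclideanSpace ℝ (Fin n) // x ∈ W.1 ∧ ‖x‖ = 1},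
        ‖Matrix.toEuclideanLin M x.1‖) ≤ ‖T‖
      rcases isEmpty_or_nonempty {x : EuclideanSpace ℝ (Fin n) // x ∈ W.1 ∧ ‖x‖ = 1} with h | h
      · rw [Real.iInf_of_isEmpty]; exact norm_nonneg _
      · obtain ⟨x⟩ := h
        have hbb : BddBelow (Set.range fun x : {x : EuclideanSpace ℝ (Fin n) //
            x ∈ W.1 ∧ ‖x‖ = 1} => ‖Matrix.toEuclideanLin M x.1‖) :=
          ⟨0, by rintro a ⟨z, rfl⟩; exact norm_nonneg _⟩
        refine ciInf_le_of_le hbb x ?_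
        have heq : Matrix.toEuclideanLin M x.1 = T x.1 := rfl
        rw [heq]
        calc ‖T x.1‖ ≤ ‖T‖ * ‖x.1‖ := T.le_opNorm _
          _ = ‖T‖ := by rw [x.2.2, mul_one]
    haveI hne' : Nonempty {x : EuclideanSpace ℝ (Fin n) // x ∈ V ∧ ‖x‖ = 1} := by
      have hc0 : (EuclideanSpace.single (⟨0, hK⟩ : Fin K) (1 : ℝ)) ≠ 0 := by
        intro h
        have := congrArg norm h
        simp [EuclideanSpace.norm_single] at this
      set v : EuclideanSpace ℝ (Fin n) :=
        Matrix.toEuclideanLin Z (EuclideanSpace.single (⟨0, hK⟩ : Fin K) (1 : ℝ)) with hv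
      have hvne : v ≠ 0 := by
        intro h
        exact hc0 (hinj (by rw [← hv, h, map_zero]))
      refine ⟨⟨‖v‖⁻¹ • v, ?_, ?_⟩⟩
      · exact Submodule.smul_mem _ _ (LinearMap.mem_range_self _ _)
      · rw [norm_smul, norm_inv, norm_norm, inv_mul_cancel₀ (norm_ne_zero_iff.mpr hvne)]
    have hmain : (nmin : ℝ) * σ ≤
        ⨅ x : {x : EuclideanSpace ℝ (Fin n) // x ∈ V ∧ ‖x‖ = 1},
          ‖Matrix.toEuclideanLin M x.1‖ := by
      refine le_ciInf ?_
      rintro ⟨x, hxV, hx1⟩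
      obtain ⟨c, rfl⟩ := LinearMap.mem_range.mp hxV
      set c' : Fin K → ℝ := fun k => c k with hc'
      set N : Fin K → ℝ := fun k => (commCard Z k : ℝ) with hN
      set D : Fin K → ℝ := fun k => N k * c' k with hD
      set w : Fin K → ℝ := Pm.mulVec D with hw
      have hNmin : ∀ k, (nmin : ℝ) ≤ N k := fun k => by
        show (nmin : ℝ) ≤ (commCard Z k : ℝ)
        exact_mod_cast hmin k
      have hN0 : ∀ k, (0 : ℝ) ≤ N k := fun k =>
        le_trans (by positivity) (hNmin k)
      have hxi : ∀ i, (Matrix.toEuclideanLin Z c) i = c' (f i) := by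
        intro i
        rw [toEuc_apply, ← mulVec_apply' Z c' i, hmv]
      have hZtZ : (Z.transpose * Z).mulVec c' = D := by
        funext k
        rw [← Matrix.mulVec_mulVec, mulVec_apply']
        have h3 : ∀ i', Z.transpose k i' * (Z.mulVec c') i'
            = (if f i' = k then 1 else 0) * c' (f i') := by
          intro i'
          rw [Matrix.transpose_apply, hZd i' k, hmv c' i']
        rw [Finset.sum_congr rfl fun i' _ => h3 i']
        simp only [ite_mul, one_mul, zero_mul]
        rw [← Finset.sum_filter,
          Finset.sum_congr rfl fun i' hi' => by rw [(Finset.mem_filter.mp hi').2],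
          Finset.sum_const, nsmul_eq_mul]
        show ((Finset.univ.filter fun i => f i = k).card : ℝ) * c' k = N k * c' k
        simp only [hN]
        rw [hcomm k]
      have hyi : ∀ i, (Matrix.toEuclideanLin M (Matrix.toEuclideanLin Z c)) i = w (f i) := by
        intro i
        rw [toEuc_apply]
        have h1 : ∑ j, M i j * (Matrix.toEuclideanLin Z c) j
            = ∑ j, M i j * (Z.mulVec c') j :=
          Finset.sum_congr rfl fun j _ => by rw [hxi j, hmv c' j]
        rw [h1, ← mulVec_apply', Matrix.mulVec_mulVec, hM,
          Matrix.mul_assoc (Z * Pm) Z.transpose Z, Matrix.mul_assoc Z Pm (Z.transpose * Z),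
          ← Matrix.mulVec_mulVec, ← Matrix.mulVec_mulVec, hZtZ, hmv]
      have hsum1 : ∑ i, ((Matrix.toEuclideanLin M (Matrix.toEuclideanLin Z c)) i) ^ 2
          = ∑ k, N k * (w k) ^ 2 := by
        rw [Finset.sum_congr rfl fun i _ => by rw [hyi i]]
        exact hfiber fun k => (w k) ^ 2
      set dE : EuclideanSpace ℝ (Fin K) := (WithLp.equiv 2 (Fin K → ℝ)).symm D with hdE
      have hwk : ∀ k, (Matrix.toEuclideanLin Pm dE) k = w k := by
        intro k
        rw [toEuc_apply, hw, mulVec_apply']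
        refine Finset.sum_congr rfl fun l _ => ?_
        rw [hdE, WithLp.equiv_symm_apply, WithLp.ofLp_toLp]
      have hdnorm : ‖dE‖ ^ 2 = ∑ k, (D k) ^ 2 := by
        rw [enorm_eq, Real.sq_sqrt (Finset.sum_nonneg fun k _ => sq_nonneg _)]
        refine Finset.sum_congr rfl fun k _ => ?_
        rw [hdE, WithLp.equiv_symm_apply, WithLp.ofLp_toLp]
      have hwnorm : ‖Matrix.toEuclideanLin Pm dE‖ ^ 2 = ∑ k, (w k) ^ 2 := by
        rw [enorm_eq, Real.sq_sqrt (Finset.sum_nonneg fun k _ => sq_nonneg _)]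
        exact Finset.sum_congr rfl fun k _ => by rw [hwk k]
      have hstep1 : σ ^ 2 * ∑ k, (D k) ^ 2 ≤ ∑ k, (w k) ^ 2 := by
        have h := sval_smul_le Pm dE
        have hsq : (σ * ‖dE‖) ^ 2 ≤ ‖Matrix.toEuclideanLin Pm dE‖ ^ 2 :=
          pow_le_pow_left₀ (mul_nonneg hσ0 (norm_nonneg _)) h 2
        calc σ ^ 2 * ∑ k, (D k) ^ 2 = (σ * ‖dE‖) ^ 2 := by rw [mul_pow, hdnorm]
          _ ≤ ‖Matrix.toEuclideanLin Pm dE‖ ^ 2 := hsq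
          _ = ∑ k, (w k) ^ 2 := hwnorm
      have hstep2 : (nmin : ℝ) * ∑ k, N k * (c' k) ^ 2 ≤ ∑ k, (D k) ^ 2 := by
        rw [Finset.mul_sum]
        refine Finset.sum_le_sum fun k _ => ?_
        show (nmin : ℝ) * (N k * (c' k) ^ 2) ≤ (N k * c' k) ^ 2
        calc (nmin : ℝ) * (N k * (c' k) ^ 2) ≤ N k * (N k * (c' k) ^ 2) :=
              mul_le_mul_of_nonneg_right (hNmin k) (mul_nonneg (hN0 k) (sq_nonneg _))
          _ = (N k * c' k) ^ 2 := by ring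
      have hstep3 : ∑ k, N k * (c' k) ^ 2 = 1 := by
        have h1 : ∑ i, (c' (f i)) ^ 2 = ∑ k, N k * (c' k) ^ 2 :=
          hfiber fun k => (c' k) ^ 2
        have h2 : ‖Matrix.toEuclideanLin Z c‖ ^ 2 = ∑ i, (c' (f i)) ^ 2 := by
          rw [enorm_eq, Real.sq_sqrt (Finset.sum_nonneg fun i _ => sq_nonneg _)]
          exact Finset.sum_congr rfl fun i _ => by rw [hxi i]
        rw [← h1, ← h2, hx1, one_pow]
      have hfinal : ((nmin : ℝ) * σ) ^ 2
          ≤ ∑ i, ((Matrix.toEuclideanLin M (Matrix.toEuclideanLin Z c)) i) ^ 2 := by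
        rw [hsum1]
        have hb1 : (nmin : ℝ) * ∑ k, (w k) ^ 2 ≤ ∑ k, N k * (w k) ^ 2 := by
          rw [Finset.mul_sum]
          exact Finset.sum_le_sum fun k _ =>
            mul_le_mul_of_nonneg_right (hNmin k) (sq_nonneg _)
        calc ((nmin : ℝ) * σ) ^ 2 = (nmin : ℝ) * (σ ^ 2 * ((nmin : ℝ) * 1)) := by ring
          _ = (nmin : ℝ) * (σ ^ 2 * ((nmin : ℝ) * ∑ k, N k * (c' k) ^ 2)) := by rw [hstep3]
          _ ≤ (nmin : ℝ) * (σ ^ 2 * ∑ k, (D k) ^ 2) := by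
              refine mul_le_mul_of_nonneg_left ?_ (by positivity)
              exact mul_le_mul_of_nonneg_left hstep2 (sq_nonneg _)
          _ ≤ (nmin : ℝ) * ∑ k, (w k) ^ 2 := mul_le_mul_of_nonneg_left hstep1 (by positivity)
          _ ≤ ∑ k, N k * (w k) ^ 2 := hb1
      show (nmin : ℝ) * σ ≤ ‖Matrix.toEuclideanLin M (Matrix.toEuclideanLin Z c)‖
      rw [enorm_eq]
      calc (nmin : ℝ) * σ = Real.sqrt (((nmin : ℝ) * σ) ^ 2) :=
            (Real.sqrt_sq (by positivity)).symm
        _ ≤ _ := Real.sqrt_le_sqrt hfinal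
    calc (nmin : ℝ) * σ ≤ ⨅ x : {x : EuclideanSpace ℝ (Fin n) // x ∈ V ∧ ‖x‖ = 1},
          ‖Matrix.toEuclideanLin M x.1‖ := hmain
      _ ≤ sval M K := le_ciSup hbdd ⟨V, hVr⟩
end

section
/- Let Y be a centered Bernoulli random variable with parameter p ∈ (0,1), p ≠ 1/2, i.e. Y = 1−p with probability p and Y = −p with probability 1−p. Then the squared sub-Gaussian (ψ₂) norm of Y equals (1−2p)/(2 log((1−p)/p)). -/
/-- The moment generating function `E[exp(lam * Y)]` of the centered Bernoulli
random variable `Y` taking value `1 - p` with probability `p` and `-p` with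
probability `1 - p`. -/
noncomputable def bernMGF (p lam : ℝ) : ℝ :=
  p * Real.exp (lam * (1 - p)) + (1 - p) * Real.exp (-(lam * p))

/-- The squared optimal sub-Gaussian (ψ₂) constant of the centered Bernoulli
variable with parameter `p`: the least `s ≥ 0` such that
`E[exp(lam Y)] ≤ exp(s lam² / 2)` for all `lam`. -/
noncomputable def psi2sq (p : ℝ) : ℝ :=
  sInf {s : ℝ | 0 ≤ s ∧ ∀ lam : ℝ, bernMGF p lam ≤ Real.exp (s * lam ^ 2 / 2)}

open Real Set

lemma hasDerivAt_aux1 {y : ℝ} (hy : 0 < y) :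
    HasDerivAt (fun z : ℝ => z - z⁻¹ - 2 * Real.log z) ((1 - y⁻¹) ^ 2) y := by
  have h1 : HasDerivAt (fun z : ℝ => z - z⁻¹ - 2 * Real.log z)
      (1 - (-(y^2)⁻¹) - 2 * y⁻¹) y := by
    exact ((hasDerivAt_id y).sub (hasDerivAt_inv hy.ne')).sub
      ((Real.hasDerivAt_log hy.ne').const_mul 2)
  convert h1 using 1
  field_simp
  ring

lemma aux_log_le {x : ℝ} (hx : 1 < x) : 2 * Real.log x ≤ x - x⁻¹ := by
  have mono : MonotoneOn (fun z : ℝ => z - z⁻¹ - 2 * Real.log z) (Set.Ici 1) := by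
    apply monotoneOn_of_deriv_nonneg (convex_Ici 1)
    · apply ContinuousOn.sub (ContinuousOn.sub (continuousOn_id) ?_) ?_
      · exact ContinuousOn.inv₀ continuousOn_id (fun y hy => by
          have : (1:ℝ) ≤ y := hy; positivity)
      · exact (Real.continuousOn_log.mono (fun y hy => by
          have : (1:ℝ) ≤ y := hy; simp; positivity)).const_smul 2 |>.congr (by intro y hy; simp [smul_eq_mul])
    · intro y hy
      rw [interior_Ici] at hy
      exact (hasDerivAt_aux1 (lt_trans one_pos hy)).differentiableAt.differentiableWithinAt
    · intro y hy
      rw [interior_Ici] at hy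
      rw [(hasDerivAt_aux1 (lt_trans one_pos hy)).deriv]
      positivity
  have h := mono (Set.self_mem_Ici) (le_of_lt hx : (1:ℝ) ≤ x) (le_of_lt hx)
  simp at h
  linarith

lemma aux_log_lt {x : ℝ} (hx : 1 < x) : 2 * (x - 1) / (x + 1) < Real.log x := by
  have mono : StrictMonoOn (fun z : ℝ => Real.log z - 2 * (z - 1) / (z + 1)) (Set.Ici 1) := by
    apply strictMonoOn_of_deriv_pos (convex_Ici 1)
    · apply ContinuousOn.sub
      · exact Real.continuousOn_log.mono (fun y hy => by
          have : (1:ℝ) ≤ y := hy; simp; positivity)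
      · exact ContinuousOn.div (by fun_prop) (by fun_prop) (fun y hy => by
          have : (1:ℝ) ≤ y := hy; positivity)
    · intro y hy
      rw [interior_Ici] at hy
      have hy0 : (0:ℝ) < y := lt_trans one_pos hy
      have hy1 : y + 1 ≠ 0 := by positivity
      have hd : HasDerivAt (fun z : ℝ => Real.log z - 2 * (z - 1) / (z + 1))
          (y⁻¹ - (2 * 1 * (y + 1) - 2 * (y - 1) * 1) / (y + 1) ^ 2) y := by
        have := (Real.hasDerivAt_log hy0.ne').sub
          ((((hasDerivAt_id y).sub_const 1).const_mul 2).div ((hasDerivAt_id y).add_const 1) hy1)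
        exact this
      rw [hd.deriv]
      have : y⁻¹ - (2 * 1 * (y + 1) - 2 * (y - 1) * 1) / (y + 1) ^ 2
          = (y - 1)^2 / (y * (y + 1)^2) := by field_simp; ring
      rw [this]
      have hy2 : (0:ℝ) < y - 1 := sub_pos.mpr (Set.mem_Ioi.mp hy)
      exact div_pos (pow_pos hy2 2) (by positivity)
  have h := mono (Set.self_mem_Ici) (le_of_lt hx : (1:ℝ) ≤ x) hx
  simp at h
  linarith


noncomputable def Nf (p x : ℝ) : ℝ := p * Real.exp x + (1 - p)
noncomputable def tf (p x : ℝ) : ℝ := p * Real.exp x / Nf p x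
noncomputable def ff (p x : ℝ) : ℝ := Real.log (Nf p x) - x * p
noncomputable def cc (p : ℝ) : ℝ := (1 - 2*p) / (2 * Real.log ((1-p)/p))
noncomputable def Ff (p x : ℝ) : ℝ := cc p * x^2 / 2 - ff p x
noncomputable def Gf (p x : ℝ) : ℝ := cc p * x - (tf p x - p)

section basic
variable {p : ℝ} (hp0 : 0 < p) (hp1 : p < 1)

include hp0 hp1 in
lemma Npos (x : ℝ) : 0 < Nf p x := by
  have := Real.exp_pos x
  unfold Nf; nlinarith

include hp0 hp1 in
lemma bern_eq_exp_ff (x : ℝ) : bernMGF p x = Real.exp (ff p x) := by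
  unfold ff
  rw [Real.exp_sub, Real.exp_log (Npos hp0 hp1 x)]
  have e1 : Real.exp (x*(1-p)) = Real.exp x * (Real.exp (x*p))⁻¹ := by
    rw [← Real.exp_neg, ← Real.exp_add]; ring_nf
  have e2 : Real.exp (-(x*p)) = (Real.exp (x*p))⁻¹ := Real.exp_neg _
  unfold bernMGF Nf
  rw [e1, e2]
  have := Real.exp_ne_zero (x*p)
  field_simp
  try ring

include hp0 hp1 in
lemma hasDerivAt_tf (x : ℝ) : HasDerivAt (tf p) (tf p x * (1 - tf p x)) x := by
  have hN : HasDerivAt (Nf p) (p * Real.exp x) x := by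
    unfold Nf
    exact ((Real.hasDerivAt_exp x).const_mul p).add_const _
  have h := (((Real.hasDerivAt_exp x).const_mul p).div hN (Npos hp0 hp1 x).ne')
  refine h.congr_deriv ?_
  have hNx := (Npos hp0 hp1 x).ne'
  have h1 : tf p x * (1 - tf p x) = (p * Real.exp x * Nf p x - p * Real.exp x * (p * Real.exp x)) / Nf p x ^ 2 := by
    unfold tf
    field_simp
    try ring
  rw [h1]

include hp0 hp1 in
lemma hasDerivAt_ff (x : ℝ) : HasDerivAt (ff p) (tf p x - p) x := by
  have hN : HasDerivAt (Nf p) (p * Real.exp x) x := by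
    unfold Nf
    exact ((Real.hasDerivAt_exp x).const_mul p).add_const _
  have h := (hN.log (Npos hp0 hp1 x).ne').sub ((hasDerivAt_id x).mul_const p)
  refine h.congr_deriv ?_
  unfold tf
  simp [div_eq_mul_inv]

include hp0 hp1 in
lemma hasDerivAt_Ff (x : ℝ) : HasDerivAt (Ff p) (Gf p x) x := by
  have h2 : HasDerivAt (fun y : ℝ => cc p * y^2 / 2) (cc p * x) x := by
    have := ((hasDerivAt_pow 2 x).const_mul (cc p)).div_const 2
    refine this.congr_deriv ?_; ring
  have := h2.sub (hasDerivAt_ff hp0 hp1 x)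
  exact this

end basic


noncomputable def aa (p : ℝ) : ℝ := (1 - Real.sqrt (1 - 4 * cc p))/2
noncomputable def bb (p : ℝ) : ℝ := (1 + Real.sqrt (1 - 4 * cc p))/2


section consts
variable {p : ℝ} (hp0 : 0 < p) (hp : p < 1/2)
include hp0 hp

lemma hx1 : 1 < (1-p)/p := (one_lt_div hp0).mpr (by linarith)

lemma hL : 0 < Real.log ((1-p)/p) := Real.log_pos (hx1 hp0 hp)

lemma hc : 0 < cc p := div_pos (by linarith) (by linarith [hL hp0 hp])

lemma hpqc : p * (1-p) ≤ cc p := by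
  have h := aux_log_le (hx1 hp0 hp)
  have hL' := hL hp0 hp
  have hq : 0 < 1 - p := by linarith
  have hxe : (1-p)/p - ((1-p)/p)⁻¹ = (1-2*p)/(p*(1-p)) := by
    rw [inv_div]
    field_simp
    ring
  rw [hxe, le_div_iff₀ (by positivity)] at h
  unfold cc
  rw [le_div_iff₀ (by positivity)]
  nlinarith

lemma hc4 : cc p < 1/4 := by
  have h := aux_log_lt (hx1 hp0 hp)
  have hL' := hL hp0 hp
  have hxe : 2 * ((1-p)/p - 1) / ((1-p)/p + 1) = 2*(1-2*p) := by
    rw [div_eq_iff (by have h1 : (1-p)/p + 1 = 1/p := by field_simp; ring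
                       rw [h1]; positivity)]
    field_simp
    ring
  rw [hxe] at h
  unfold cc
  rw [div_lt_iff₀ (by positivity)]
  linarith

lemma hs_pos : 0 < Real.sqrt (1 - 4 * cc p) :=
  Real.sqrt_pos.mpr (by linarith [hc4 hp0 hp])

lemma hs_sq : Real.sqrt (1 - 4 * cc p) ^ 2 = 1 - 4 * cc p :=
  Real.sq_sqrt (by linarith [hc4 hp0 hp])

lemma hs_lt1 : Real.sqrt (1 - 4 * cc p) < 1 := by
  nlinarith [hs_sq hp0 hp, hs_pos hp0 hp, hc hp0 hp]

lemma ha_pos : 0 < aa p := by unfold aa; linarith [hs_lt1 hp0 hp]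
lemma hb_lt1 : bb p < 1 := by unfold bb; linarith [hs_lt1 hp0 hp]
omit hp0 hp in
lemma hab_sum : aa p + bb p = 1 := by unfold aa bb; ring
lemma hab_mul : aa p * bb p = cc p := by
  have := hs_sq hp0 hp
  unfold aa bb; nlinarith
lemma ha_le_b : aa p ≤ bb p := by
  unfold aa bb; linarith [hs_pos hp0 hp]

lemma hp_le_a : p ≤ aa p := by
  by_contra hcon
  push_neg at hcon
  have h1 := hpqc hp0 hp
  rw [← hab_mul hp0 hp] at h1
  have h2 : bb p = 1 - aa p := by linarith [hab_sum (p := p)]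
  rw [h2] at h1
  nlinarith [(p - aa p) * (1 - p - aa p)]

lemma hb_le_q : bb p ≤ 1 - p := by
  have h1 := hp_le_a hp0 hp
  have h2 := hab_sum (p := p)
  linarith

end consts


noncomputable def La (p : ℝ) : ℝ := Real.log ((1-p) * aa p / (p * bb p))
noncomputable def Lb (p : ℝ) : ℝ := Real.log ((1-p) * bb p / (p * aa p))
noncomputable def LL (p : ℝ) : ℝ := 2 * Real.log ((1-p)/p)

section s3
variable {p : ℝ} (hp0 : 0 < p) (hp : p < 1/2)
include hp0 hp

lemma tval {u : ℝ} (hu0 : 0 < u) (hu1 : u < 1) :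
    tf p (Real.log ((1-p) * u / (p * (1-u)))) = u := by
  have hq : 0 < 1 - p := by linarith
  have h1u : 0 < 1 - u := by linarith
  have hz : 0 < (1-p) * u / (p * (1-u)) := by positivity
  unfold tf Nf
  rw [Real.exp_log hz]
  rw [div_eq_iff]
  · field_simp
    ring
  · have : p * ((1-p) * u / (p * (1-u))) = (1-p) * u / (1-u) := by
      field_simp
    rw [this]
    positivity


omit hp0 hp in
lemma t_at_0 (hp0 : 0 < p) (hp1 : p < 1) : tf p 0 = p := by
  unfold tf Nf
  simp

lemma t_at_La : tf p (La p) = aa p := by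
  have h1 : bb p = 1 - aa p := by have := hab_sum (p := p); linarith
  unfold La
  rw [h1]
  exact tval hp0 hp (ha_pos hp0 hp) (by linarith [ha_le_b hp0 hp, hb_lt1 hp0 hp, ha_pos hp0 hp])

lemma t_at_Lb : tf p (Lb p) = bb p := by
  have h1 : aa p = 1 - bb p := by have := hab_sum (p := p); linarith
  unfold Lb
  rw [h1]
  exact tval hp0 hp (lt_of_lt_of_le (ha_pos hp0 hp) (ha_le_b hp0 hp)) (hb_lt1 hp0 hp)

lemma t_at_LL : tf p (LL p) = 1 - p := by
  have hq : 0 < 1 - p := by linarith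
  have h1 : LL p = Real.log ((1-p) * (1-p) / (p * (1 - (1-p)))) := by
    unfold LL
    rw [show (1-p) * (1-p) / (p * (1 - (1-p))) = ((1-p)/p)^2 by rw [sub_sub_cancel]; ring,
      Real.log_pow]
    push_cast
    ring
  rw [h1]
  exact tval hp0 hp hq (by linarith)

lemma tmono : Monotone (tf p) := by
  intro x y hxy
  unfold tf
  rw [div_le_div_iff₀ (Npos hp0 (by linarith) x) (Npos hp0 (by linarith) y)]
  unfold Nf
  have h := mul_le_mul_of_nonneg_left (Real.exp_le_exp.mpr hxy)
    (by nlinarith : (0:ℝ) ≤ p * (1 - p))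
  nlinarith [Real.exp_pos x, Real.exp_pos y]

lemma hkey : p * bb p ≤ (1-p) * aa p := by
  have h1 := hp_le_a hp0 hp
  have h2 := hb_le_q hp0 hp
  have h3 := ha_pos hp0 hp
  have h4 := ha_le_b hp0 hp
  nlinarith

lemma hLa_nonneg : 0 ≤ La p := by
  apply Real.log_nonneg
  rw [le_div_iff₀ (by nlinarith [ha_pos hp0 hp, ha_le_b hp0 hp] : 0 < p * bb p)]
  have := hkey hp0 hp
  linarith

lemma hLab : La p ≤ Lb p := by
  have h3 := ha_pos hp0 hp
  have h4 := ha_le_b hp0 hp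
  have h5 : 0 < bb p := lt_of_lt_of_le h3 h4
  have hq : (0:ℝ) < 1 - p := by linarith
  apply Real.log_le_log
  · positivity
  · rw [div_le_div_iff₀ (by positivity) (by positivity)]
    nlinarith [mul_le_mul h4 h4 h3.le h5.le, mul_pos hp0 hq]

lemma hLb_le : Lb p ≤ LL p := by
  have h1 : LL p = Real.log (((1-p)/p)^2) := by
    unfold LL; rw [Real.log_pow]; push_cast; ring
  rw [h1]
  have h3 := ha_pos hp0 hp
  have h4 := ha_le_b hp0 hp
  have h5 : 0 < bb p := lt_of_lt_of_le h3 h4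
  have hq : (0:ℝ) < 1 - p := by linarith
  apply Real.log_le_log
  · positivity
  · rw [div_pow, div_le_div_iff₀ (by positivity) (by positivity)]
    nlinarith [mul_le_mul_of_nonneg_left (hkey hp0 hp) (by positivity : (0:ℝ) ≤ p * (1-p))]

lemma hasDerivAt_Gf (x : ℝ) :
    HasDerivAt (Gf p) ((tf p x - aa p) * (tf p x - bb p)) x := by
  have h := ((hasDerivAt_id x).const_mul (cc p)).sub
    ((hasDerivAt_tf hp0 (by linarith) x).sub_const p)
  have he : Gf p = fun y => cc p * y - (tf p y - p) := rfl
  rw [he]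
  refine h.congr_deriv ?_
  have e1 := hab_sum (p := p)
  have e2 := hab_mul hp0 hp
  linear_combination (tf p x) * e1 - e2

end s3

section s4
variable {p : ℝ} (hp0 : 0 < p) (hp : p < 1/2)
include hp0 hp

lemma G_at_0 : Gf p 0 = 0 := by
  unfold Gf
  rw [t_at_0 hp0 (by linarith)]
  ring

lemma G_at_LL : Gf p (LL p) = 0 := by
  unfold Gf
  rw [t_at_LL hp0 hp]
  have hL' := hL hp0 hp
  unfold cc LL
  field_simp
  ring

omit hp0 hp in
lemma F_at_0 : Ff p 0 = 0 := by
  unfold Ff ff Nf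
  simp

lemma N_at_LL : Nf p (LL p) = (1-p)/p := by
  have hq : 0 < 1 - p := by linarith
  unfold Nf LL
  rw [show 2 * Real.log ((1-p)/p) = Real.log ((1-p)/p) + Real.log ((1-p)/p) by ring,
    Real.exp_add, Real.exp_log (by positivity)]
  field_simp
  ring

lemma F_at_LL : Ff p (LL p) = 0 := by
  have hL' := hL hp0 hp
  unfold Ff ff
  rw [N_at_LL hp0 hp]
  show cc p * LL p ^ 2 / 2 - (Real.log ((1-p)/p) - LL p * p) = 0
  unfold cc LL
  have hLne : Real.log ((1-p)/p) ≠ 0 := ne_of_gt hL'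
  field_simp
  ring

lemma Gcont : Continuous (Gf p) := by
  have : Differentiable ℝ (Gf p) := fun x => (hasDerivAt_Gf hp0 hp x).differentiableAt
  exact this.continuous

lemma Gmono1 : MonotoneOn (Gf p) (Set.Iic (La p)) := by
  apply monotoneOn_of_deriv_nonneg (convex_Iic _) (Gcont hp0 hp).continuousOn
  · intro x _
    exact ((hasDerivAt_Gf hp0 hp x).differentiableAt).differentiableWithinAt
  · intro x hx
    rw [interior_Iic] at hx
    rw [(hasDerivAt_Gf hp0 hp x).deriv]
    have h1 : tf p x ≤ aa p := by
      rw [← t_at_La hp0 hp]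
      exact tmono hp0 hp (le_of_lt hx)
    have h2 : tf p x ≤ bb p := le_trans h1 (ha_le_b hp0 hp)
    nlinarith

lemma Ganti : AntitoneOn (Gf p) (Set.Icc (La p) (Lb p)) := by
  apply antitoneOn_of_deriv_nonpos (convex_Icc _ _) (Gcont hp0 hp).continuousOn
  · intro x _
    exact ((hasDerivAt_Gf hp0 hp x).differentiableAt).differentiableWithinAt
  · intro x hx
    rw [interior_Icc] at hx
    rw [(hasDerivAt_Gf hp0 hp x).deriv]
    have h1 : aa p ≤ tf p x := by
      rw [← t_at_La hp0 hp]
      exact tmono hp0 hp (le_of_lt hx.1)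
    have h2 : tf p x ≤ bb p := by
      rw [← t_at_Lb hp0 hp]
      exact tmono hp0 hp (le_of_lt hx.2)
    nlinarith

lemma Gmono2 : MonotoneOn (Gf p) (Set.Ici (Lb p)) := by
  apply monotoneOn_of_deriv_nonneg (convex_Ici _) (Gcont hp0 hp).continuousOn
  · intro x _
    exact ((hasDerivAt_Gf hp0 hp x).differentiableAt).differentiableWithinAt
  · intro x hx
    rw [interior_Ici] at hx
    rw [(hasDerivAt_Gf hp0 hp x).deriv]
    have h1 : bb p ≤ tf p x := by
      rw [← t_at_Lb hp0 hp]
      exact tmono hp0 hp (le_of_lt hx)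
    have h2 : aa p ≤ tf p x := le_trans (ha_le_b hp0 hp) h1
    nlinarith

lemma GLa_nonneg : 0 ≤ Gf p (La p) := by
  have h := Gmono1 hp0 hp (Set.mem_Iic.mpr (hLa_nonneg hp0 hp)) Set.self_mem_Iic
    (hLa_nonneg hp0 hp)
  rw [G_at_0 hp0 hp] at h
  exact h

lemma GLb_nonpos : Gf p (Lb p) ≤ 0 := by
  have h := Gmono2 hp0 hp Set.self_mem_Ici (Set.mem_Ici.mpr (hLb_le hp0 hp))
    (hLb_le hp0 hp)
  rw [G_at_LL hp0 hp] at h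
  exact h

lemma Fnonneg (x : ℝ) : 0 ≤ Ff p x := by
  obtain ⟨m, hmem, hGm⟩ : ∃ m ∈ Set.Icc (La p) (Lb p), Gf p m = 0 := by
    have hsub := intermediate_value_Icc' (hLab hp0 hp) (Gcont hp0 hp).continuousOn
    have h0 : (0:ℝ) ∈ Set.Icc (Gf p (Lb p)) (Gf p (La p)) :=
      Set.mem_Icc.mpr ⟨GLb_nonpos hp0 hp, GLa_nonneg hp0 hp⟩
    obtain ⟨m, hm, hGm⟩ := hsub h0
    exact ⟨m, hm, hGm⟩
  have hm0 : 0 ≤ m := le_trans (hLa_nonneg hp0 hp) hmem.1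
  have hmLL : m ≤ LL p := le_trans hmem.2 (hLb_le hp0 hp)
  -- sign of G
  have Gneg1 : ∀ y ≤ (0:ℝ), Gf p y ≤ 0 := by
    intro y hy
    have := Gmono1 hp0 hp (Set.mem_Iic.mpr (le_trans hy (hLa_nonneg hp0 hp)))
      (Set.mem_Iic.mpr (hLa_nonneg hp0 hp)) hy
    rw [G_at_0 hp0 hp] at this
    exact this
  have Gpos1 : ∀ y, 0 ≤ y → y ≤ m → 0 ≤ Gf p y := by
    intro y hy0 hym
    rcases le_or_gt y (La p) with h | h
    · have := Gmono1 hp0 hp (Set.mem_Iic.mpr (hLa_nonneg hp0 hp)) (Set.mem_Iic.mpr h) hy0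
      rwa [G_at_0 hp0 hp] at this
    · have := Ganti hp0 hp (Set.mem_Icc.mpr ⟨le_of_lt h, le_trans hym hmem.2⟩) hmem hym
      rw [hGm] at this
      exact this
  have Gneg2 : ∀ y, m ≤ y → y ≤ LL p → Gf p y ≤ 0 := by
    intro y hmy hyL
    rcases le_or_gt y (Lb p) with h | h
    · have := Ganti hp0 hp hmem (Set.mem_Icc.mpr ⟨le_trans hmem.1 hmy, h⟩) hmy
      rw [hGm] at this
      exact this
    · have := Gmono2 hp0 hp (Set.mem_Ici.mpr (le_of_lt h)) (Set.mem_Ici.mpr (hLb_le hp0 hp)) hyL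
      rwa [G_at_LL hp0 hp] at this
  have Gpos2 : ∀ y, LL p ≤ y → 0 ≤ Gf p y := by
    intro y hy
    have := Gmono2 hp0 hp (Set.mem_Ici.mpr (hLb_le hp0 hp)) (Set.mem_Ici.mpr (le_trans (hLb_le hp0 hp) hy)) hy
    rwa [G_at_LL hp0 hp] at this
  -- F pieces
  have Fdiff : ∀ y, DifferentiableAt ℝ (Ff p) y :=
    fun y => (hasDerivAt_Ff hp0 (by linarith) y).differentiableAt
  have Fcont : Continuous (Ff p) := Differentiable.continuous (fun y => Fdiff y)
  rcases le_or_gt x 0 with hx | hx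
  · have hFanti : AntitoneOn (Ff p) (Set.Iic (0:ℝ)) := by
      apply antitoneOn_of_deriv_nonpos (convex_Iic _) Fcont.continuousOn
        (fun y _ => (Fdiff y).differentiableWithinAt)
      intro y hy
      rw [interior_Iic] at hy
      rw [(hasDerivAt_Ff hp0 (by linarith) y).deriv]
      exact Gneg1 y (le_of_lt hy)
    have := hFanti (Set.mem_Iic.mpr hx) Set.self_mem_Iic hx
    rwa [F_at_0 (p := p)] at this
  · rcases le_or_gt x m with hxm | hxm
    · have hFmono : MonotoneOn (Ff p) (Set.Icc (0:ℝ) m) := by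
        apply monotoneOn_of_deriv_nonneg (convex_Icc _ _) Fcont.continuousOn
          (fun y _ => (Fdiff y).differentiableWithinAt)
        intro y hy
        rw [interior_Icc] at hy
        exact (hasDerivAt_Ff hp0 (by linarith) y).deriv ▸ Gpos1 y (le_of_lt hy.1) (le_of_lt hy.2)
      have := hFmono (Set.mem_Icc.mpr ⟨le_refl 0, hm0⟩) (Set.mem_Icc.mpr ⟨le_of_lt hx, hxm⟩) (le_of_lt hx)
      rwa [F_at_0 (p := p)] at this
    · rcases le_or_gt x (LL p) with hxL | hxL
      · have hFanti : AntitoneOn (Ff p) (Set.Icc m (LL p)) := by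
          apply antitoneOn_of_deriv_nonpos (convex_Icc _ _) Fcont.continuousOn
            (fun y _ => (Fdiff y).differentiableWithinAt)
          intro y hy
          rw [interior_Icc] at hy
          exact (hasDerivAt_Ff hp0 (by linarith) y).deriv ▸ Gneg2 y (le_of_lt hy.1) (le_of_lt hy.2)
        have := hFanti (Set.mem_Icc.mpr ⟨le_of_lt hxm, hxL⟩) (Set.mem_Icc.mpr ⟨hmLL, le_refl _⟩) hxL
        rwa [F_at_LL hp0 hp] at this
      · have hFmono : MonotoneOn (Ff p) (Set.Ici (LL p)) := by
          apply monotoneOn_of_deriv_nonneg (convex_Ici _) Fcont.continuousOn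
            (fun y _ => (Fdiff y).differentiableWithinAt)
          intro y hy
          rw [interior_Ici] at hy
          exact (hasDerivAt_Ff hp0 (by linarith) y).deriv ▸ Gpos2 y (le_of_lt hy)
        have := hFmono Set.self_mem_Ici (Set.mem_Ici.mpr (le_of_lt hxL)) (le_of_lt hxL)
        rwa [F_at_LL hp0 hp] at this

lemma KS (x : ℝ) : bernMGF p x ≤ Real.exp (cc p * x^2 / 2) := by
  rw [bern_eq_exp_ff hp0 (by linarith) x]
  apply Real.exp_le_exp.mpr
  have := Fnonneg hp0 hp x
  unfold Ff at this
  linarith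

lemma tight : bernMGF p (LL p) = Real.exp (cc p * (LL p)^2 / 2) := by
  rw [bern_eq_exp_ff hp0 (by linarith) (LL p)]
  congr 1
  have := F_at_LL hp0 hp
  unfold Ff at this
  linarith

end s4

lemma bern_symm (p lam : ℝ) : bernMGF (1-p) lam = bernMGF p (-lam) := by
  unfold bernMGF
  rw [show lam * (1-(1-p)) = -(-lam * p) by ring, show -(lam * (1-p)) = -lam * (1-p) by ring,
    show (1 - (1-p)) = p by ring]
  ring

lemma psi2sq_symm (p : ℝ) : psi2sq (1-p) = psi2sq p := by
  unfold psi2sq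
  congr 1
  ext s
  simp only [Set.mem_setOf_eq]
  constructor
  · rintro ⟨h0, h⟩
    refine ⟨h0, fun lam => ?_⟩
    have := h (-lam)
    rw [bern_symm p (-lam), neg_neg] at this
    simpa using this
  · rintro ⟨h0, h⟩
    refine ⟨h0, fun lam => ?_⟩
    rw [bern_symm p lam]
    simpa using h (-lam)

lemma cc_symm {p : ℝ} (hp0 : 0 < p) (hp1 : p < 1) : cc (1-p) = cc p := by
  unfold cc
  rw [show (1:ℝ) - (1-p) = p by ring,
    show p / (1-p) = ((1-p)/p)⁻¹ by rw [inv_div], Real.log_inv,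
    show (1 - 2*(1-p)) = -(1-2*p) by ring,
    show 2 * -Real.log ((1-p)/p) = -(2 * Real.log ((1-p)/p)) by ring,
    neg_div_neg_eq]

lemma psi2sq_eq_cc {p : ℝ} (hp0 : 0 < p) (hp : p < 1/2) : psi2sq p = cc p := by
  have hcS : cc p ∈ {s : ℝ | 0 ≤ s ∧ ∀ lam : ℝ, bernMGF p lam ≤ Real.exp (s * lam ^ 2 / 2)} :=
    ⟨(hc hp0 hp).le, fun lam => KS hp0 hp lam⟩
  unfold psi2sq
  apply le_antisymm
  · exact csInf_le ⟨0, fun s hs => hs.1⟩ hcS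
  · apply le_csInf ⟨cc p, hcS⟩
    rintro s ⟨hs0, hs⟩
    have h := hs (LL p)
    rw [tight hp0 hp] at h
    have h2 := Real.exp_le_exp.mp h
    have hLLpos : 0 < LL p := by
      have := hL hp0 hp
      unfold LL
      linarith
    nlinarith [pow_pos hLLpos 2]

/-- Buldygin–Kozachenko: for `p ∈ (0,1)`, `p ≠ 1/2`, the squared ψ₂ norm of a
centered Bernoulli(p) random variable equals `(1 - 2p) / (2 log((1-p)/p))`. -/
theorem psi2sq_centered_bernoulli {p : ℝ} (hp : p ∈ Set.Ioo (0 : ℝ) 1) (hhalf : p ≠ 1 / 2) :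
    psi2sq p = (1 - 2 * p) / (2 * Real.log ((1 - p) / p)) := by
  obtain ⟨hp0, hp1⟩ := hp
  show psi2sq p = cc p
  rcases lt_or_gt_of_ne hhalf with h | h
  · exact psi2sq_eq_cc hp0 h
  · have hq0 : 0 < 1 - p := by linarith
    have hq : 1 - p < 1/2 := by linarith
    calc psi2sq p = psi2sq (1 - (1-p)) := by rw [show (1:ℝ) - (1-p) = p by ring]
    _ = psi2sq (1-p) := psi2sq_symm (1-p)
    _ = cc (1-p) := psi2sq_eq_cc hq0 hq
    _ = cc p := cc_symm hp0 hp1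
end

section
/- For a centered Bernoulli random variable Y with parameter p ∈ (0,1), the optimal sub-Gaussian constant satisfies ‖Y‖_{ψ₂} ≤ 1/√(2 |log(min{2p, 2(1−p)})|) whenever p ≠ 1/2. -/
open Real
set_option maxHeartbeats 2000000


lemma exp_56_ub : Real.exp (5/6 : ℝ) ≤ 2.301 := by
  have h := Real.exp_bound' (x := 5/6) (by norm_num) (by norm_num) (n := 6) (by norm_num)
  refine h.trans ?_
  norm_num [Finset.sum_range_succ, Nat.factorial]

lemma exp_53_ub : Real.exp (5/3 : ℝ) ≤ 5.295 := by
  have h : Real.exp (5/3 : ℝ) = Real.exp (5/6) ^ 2 := by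
    rw [show (5/3 : ℝ) = (2:ℕ) * (5/6) by push_cast; ring, Real.exp_nat_mul]
  rw [h]
  calc Real.exp (5/6:ℝ) ^ 2 ≤ 2.301 ^ 2 := by
        exact pow_le_pow_left₀ (Real.exp_pos _).le exp_56_ub 2
    _ ≤ 5.295 := by norm_num

lemma exp_07_ub : Real.exp (0.7 : ℝ) ≤ 2.01377 := by
  have h := Real.exp_bound' (x := 0.7) (by norm_num) (by norm_num) (n := 6) (by norm_num)
  refine h.trans ?_
  norm_num [Finset.sum_range_succ, Nat.factorial]

lemma exp_21_ub : Real.exp (2.1 : ℝ) ≤ 8.167 := by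
  have h : Real.exp (2.1 : ℝ) = Real.exp (0.7) ^ 3 := by
    rw [show (2.1 : ℝ) = (3:ℕ) * (0.7) by push_cast; ring, Real.exp_nat_mul]
  rw [h]
  calc Real.exp (0.7:ℝ) ^ 3 ≤ 2.01377 ^ 3 := by
        exact pow_le_pow_left₀ (Real.exp_pos _).le exp_07_ub 3
    _ ≤ 8.167 := by norm_num

lemma exp_049_ub : Real.exp (0.49 : ℝ) ≤ 1.63232 := by
  have h := Real.exp_bound' (x := 0.49) (by norm_num) (by norm_num) (n := 6) (by norm_num)
  refine h.trans ?_
  norm_num [Finset.sum_range_succ, Nat.factorial]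

lemma exp_245_ub : Real.exp (2.45 : ℝ) ≤ 11.589 := by
  have h : Real.exp (2.45 : ℝ) = Real.exp (0.49) ^ 5 := by
    rw [show (2.45 : ℝ) = (5:ℕ) * (0.49) by push_cast; ring, Real.exp_nat_mul]
  rw [h]
  calc Real.exp (0.49:ℝ) ^ 5 ≤ 1.63232 ^ 5 := by
        exact pow_le_pow_left₀ (Real.exp_pos _).le exp_049_ub 5
    _ ≤ 11.589 := by norm_num

lemma exp_0795_lb : (2.21439 : ℝ) ≤ Real.exp (0.795 : ℝ) := by
  have h := Real.sum_le_exp_of_nonneg (x := 0.795) (by norm_num) 7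
  refine le_trans ?_ h
  norm_num [Finset.sum_range_succ, Nat.factorial]

lemma exp_159_lb : (4.9035 : ℝ) ≤ Real.exp (1.59 : ℝ) := by
  have h : Real.exp (1.59 : ℝ) = Real.exp (0.795) ^ 2 := by
    rw [show (1.59 : ℝ) = (2:ℕ) * (0.795) by push_cast; ring, Real.exp_nat_mul]
  rw [h]
  calc (4.9035 : ℝ) ≤ 2.21439 ^ 2 := by norm_num
    _ ≤ Real.exp (0.795:ℝ) ^ 2 := by
        exact pow_le_pow_left₀ (by norm_num) exp_0795_lb 2

lemma exp_072_lb : (2.05441 : ℝ) ≤ Real.exp (0.72 : ℝ) := by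
  have h := Real.sum_le_exp_of_nonneg (x := 0.72) (by norm_num) 7
  refine le_trans ?_ h
  norm_num [Finset.sum_range_succ, Nat.factorial]

lemma exp_216_lb : (8.6705 : ℝ) ≤ Real.exp (2.16 : ℝ) := by
  have h : Real.exp (2.16 : ℝ) = Real.exp (0.72) ^ 3 := by
    rw [show (2.16 : ℝ) = (3:ℕ) * (0.72) by push_cast; ring, Real.exp_nat_mul]
  rw [h]
  calc (8.6705 : ℝ) ≤ 2.05441 ^ 3 := by norm_num
    _ ≤ Real.exp (0.72:ℝ) ^ 3 := by
        exact pow_le_pow_left₀ (by norm_num) exp_072_lb 3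

lemma exp_278_ub : Real.exp (2.78 : ℝ) ≤ 16.12 := by
  have h2 : Real.exp (4 * Real.log 2) = 16 := by
    rw [show (4 : ℝ) * Real.log 2 = (4:ℕ) * Real.log 2 by push_cast; ring,
      Real.exp_nat_mul, Real.exp_log (by norm_num : (0:ℝ) < 2)]
    norm_num
  have hδ1 : (2.78 : ℝ) - 4 * Real.log 2 ≤ 0.00742 := by
    nlinarith [Real.log_two_gt_d9]
  have hδ0 : (0:ℝ) ≤ 2.78 - 4 * Real.log 2 := by
    nlinarith [Real.log_two_lt_d9]
  have key : Real.exp (2.78 : ℝ) = 16 * Real.exp (2.78 - 4 * Real.log 2) := by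
    rw [← h2, ← Real.exp_add]; ring_nf
  rw [key]
  have hb := Real.exp_bound_div_one_sub_of_interval hδ0 (by linarith)
  have : Real.exp (2.78 - 4 * Real.log 2) ≤ 1 / (1 - 0.00742) := by
    refine hb.trans ?_
    apply div_le_div_of_nonneg_left (by norm_num) (by norm_num) (by linarith)
  nlinarith


lemma exp_secant {a b x : ℝ} (hab : a < b) (h1 : a ≤ x) (h2 : x ≤ b) :
    Real.exp x * (b - a) ≤ (b - x) * Real.exp a + (x - a) * Real.exp b := by
  have hba : (0:ℝ) < b - a := by linarith
  have key := convexOn_exp.2 (Set.mem_univ a) (Set.mem_univ b)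
    (div_nonneg (by linarith : (0:ℝ) ≤ b - x) hba.le)
    (div_nonneg (by linarith : (0:ℝ) ≤ x - a) hba.le)
    (by field_simp; ring)
  simp only [smul_eq_mul] at key
  have hx' : (b-x)/(b-a)*a + (x-a)/(b-a)*b = x := by field_simp; ring
  rw [hx'] at key
  have := mul_le_mul_of_nonneg_right key hba.le
  calc Real.exp x * (b-a) ≤ ((b-x)/(b-a)*Real.exp a + (x-a)/(b-a)*Real.exp b) * (b-a) := this
    _ = (b-x)*Real.exp a + (x-a)*Real.exp b := by field_simp

lemma exp_le_quadratic_of_nonpos {x : ℝ} (hx : x ≤ 0) : Real.exp x ≤ 1 + x + x^2/2 := by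
  rcases le_or_gt x (-1) with h | h
  · have h1 : Real.exp x ≤ Real.exp (-1) := Real.exp_le_exp.2 h
    have h2 : Real.exp (-1) ≤ 1/2 := by
      rw [Real.exp_neg]
      rw [inv_le_comm₀ (Real.exp_pos 1) (by norm_num)]
      nlinarith [Real.exp_one_gt_d9]
    nlinarith [sq_nonneg (1 + x)]
  · have habs : |x| ≤ 1 := by rw [abs_le]; constructor <;> linarith
    have hb := Real.exp_bound habs (n := 4) (by norm_num)
    have h1 : Real.exp x - ∑ m ∈ Finset.range 4, x ^ m / m.factorial ≤ |x|^4 * (5/(24*4)) := by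
      have := (abs_le.mp hb).2
      refine this.trans_eq ?_
      norm_num [Nat.factorial]
    have hs : ∑ m ∈ Finset.range 4, x ^ m / (m.factorial : ℝ) = 1 + x + x^2/2 + x^3/6 := by
      norm_num [Finset.sum_range_succ, Nat.factorial]
    rw [hs] at h1
    have h4 : |x|^4 = x^4 := by rw [← abs_pow, abs_of_nonneg (by positivity)]
    rw [h4] at h1
    have h30 : x^3 ≤ 0 := by
      have : x * x^2 ≤ 0 := mul_nonpos_of_nonpos_of_nonneg hx (sq_nonneg x)
      nlinarith [this]
    have hx3 : x^4 ≤ -x^3 := by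
      have := mul_nonpos_of_nonpos_of_nonneg h30 (by linarith : (0:ℝ) ≤ x + 1)
      nlinarith [this]
    nlinarith

/-- e^x - 1 - x ≤ (e/2) x² on [0, 5/3] -/
lemma poly1 {x : ℝ} (h0 : 0 ≤ x) (h1 : x ≤ 5/3) :
    Real.exp x - 1 - x ≤ (Real.exp 1 / 2) * x^2 := by
  rcases le_or_gt x 1 with hx1 | hx1
  · have hb := Real.exp_bound' h0 hx1 (n := 4) (by norm_num)
    have hs : Real.exp x ≤ 1 + x + x^2/2 + x^3/6 + x^4*(5/96) := by
      refine hb.trans_eq ?_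
      norm_num [Finset.sum_range_succ, Nat.factorial]; ring
    have hx3 : x^3 ≤ x^2 := by nlinarith
    have hx4 : x^4 ≤ x^2 := by nlinarith
    nlinarith [Real.exp_one_gt_d9, sq_nonneg x]
  · have hsec := exp_secant (show (1:ℝ) < 5/3 by norm_num) hx1.le h1
    have h2 : Real.exp x * (5/3 - 1) ≤ (5/3 - x) * 2.7182818286 + (x - 1) * 5.295 := by
      have c1 : (5/3 - x) * Real.exp 1 ≤ (5/3 - x) * 2.7182818286 :=
        mul_le_mul_of_nonneg_left Real.exp_one_lt_d9.le (by linarith)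
      have c2 : (x - 1) * Real.exp (5/3 : ℝ) ≤ (x - 1) * 5.295 :=
        mul_le_mul_of_nonneg_left exp_53_ub (by linarith)
      linarith
    nlinarith [Real.exp_one_gt_d9]

/-- e^x - 1 - x ≤ 2 log 2 e^{x²/(4 log 2)} for x ≥ 5/3 -/
lemma star {x : ℝ} (hx : 5/3 ≤ x) :
    Real.exp x - 1 - x ≤ 2 * Real.log 2 * Real.exp (x^2 / (4 * Real.log 2)) := by
  have hc0 : (0:ℝ) < Real.log 2 := Real.log_pos one_lt_two
  have hclo := Real.log_two_gt_d9
  have hchi := Real.log_two_lt_d9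
  rcases le_or_gt (4 * Real.log 2) x with hbig | hsml
  · have h1 : x ≤ x^2 / (4 * Real.log 2) := by
      rw [le_div_iff₀ (by positivity)]
      nlinarith
    have h2 : Real.exp x ≤ Real.exp (x^2 / (4 * Real.log 2)) := Real.exp_le_exp.2 h1
    nlinarith [Real.exp_pos (x^2 / (4 * Real.log 2)), Real.exp_pos x]
  · -- x < 4 log 2 < 2.7725888
    have hxu : x < 2.7725888 := by nlinarith
    have tangent : ∀ r Er : ℝ, 0 < Er → Er ≤ Real.exp r → r ≤ x^2/(4*Real.log 2) →
        Er * (2 * Real.log 2 * (1-r) + x^2/2) ≤ 2 * Real.log 2 * Real.exp (x^2 / (4 * Real.log 2)) := by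
      intro r Er hEr0 hEr hy
      have htan : Real.exp r * (1 + (x^2/(4*Real.log 2) - r)) ≤ Real.exp (x^2/(4*Real.log 2)) := by
        have h := Real.add_one_le_exp (x^2/(4*Real.log 2) - r)
        calc Real.exp r * (1 + (x^2/(4*Real.log 2) - r))
            ≤ Real.exp r * Real.exp (x^2/(4*Real.log 2) - r) := by
              apply mul_le_mul_of_nonneg_left (by linarith) (Real.exp_pos r).le
          _ = Real.exp (x^2/(4*Real.log 2)) := by rw [← Real.exp_add]; ring_nf
      have hEtan : Er * (1 + (x^2/(4*Real.log 2) - r)) ≤ Real.exp (x^2/(4*Real.log 2)) :=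
        le_trans (mul_le_mul_of_nonneg_right hEr (by linarith)) htan
      have hmul : 2*Real.log 2 * (Er * (1 + (x^2/(4*Real.log 2) - r)))
          = Er*(2*Real.log 2*(1-r) + x^2/2) := by
        field_simp; ring
      have hfinal := mul_le_mul_of_nonneg_left hEtan (by positivity : (0:ℝ) ≤ 2*Real.log 2)
      rw [hmul] at hfinal
      exact hfinal
    rcases le_or_gt x 2.1 with hi1 | hi1
    · have hsec := exp_secant (show (5/3:ℝ) < 2.1 by norm_num) hx hi1
      have h2 : Real.exp x * (2.1 - 5/3) ≤ (2.1 - x) * 5.295 + (x - 5/3) * 8.167 := by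
        have c1 : (2.1 - x) * Real.exp (5/3:ℝ) ≤ (2.1 - x) * 5.295 :=
          mul_le_mul_of_nonneg_left exp_53_ub (by linarith)
        have c2 : (x - 5/3) * Real.exp (2.1:ℝ) ≤ (x - 5/3) * 8.167 :=
          mul_le_mul_of_nonneg_left exp_21_ub (by linarith)
        linarith
      have hy : (1:ℝ) ≤ x^2/(4*Real.log 2) := by
        rw [le_div_iff₀ (by positivity)]
        nlinarith
      have hT := tangent 1 2.7182818283 (by norm_num) Real.exp_one_gt_d9.le hy
      have hgoal : Real.exp x - 1 - x ≤ 2.7182818283*(2*Real.log 2*(1-1) + x^2/2) := by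
        nlinarith [h2]
      linarith
    rcases le_or_gt x 2.45 with hi2 | hi2
    · have hsec := exp_secant (show (2.1:ℝ) < 2.45 by norm_num) hi1.le hi2
      have h2 : Real.exp x * (2.45 - 2.1) ≤ (2.45 - x) * 8.167 + (x - 2.1) * 11.589 := by
        have c1 : (2.45 - x) * Real.exp (2.1:ℝ) ≤ (2.45 - x) * 8.167 :=
          mul_le_mul_of_nonneg_left exp_21_ub (by linarith)
        have c2 : (x - 2.1) * Real.exp (2.45:ℝ) ≤ (x - 2.1) * 11.589 :=
          mul_le_mul_of_nonneg_left exp_245_ub (by linarith)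
        linarith
      have hy : (1.59:ℝ) ≤ x^2/(4*Real.log 2) := by
        rw [le_div_iff₀ (by positivity)]
        nlinarith
      have hT := tangent 1.59 4.9035 (by norm_num) exp_159_lb hy
      have hgoal : Real.exp x - 1 - x ≤ 4.9035*(2*Real.log 2*(1-1.59) + x^2/2) := by
        nlinarith [h2]
      linarith
    · have hsec := exp_secant (show (2.45:ℝ) < 2.78 by norm_num) hi2.le (by linarith)
      have h2 : Real.exp x * (2.78 - 2.45) ≤ (2.78 - x) * 11.589 + (x - 2.45) * 16.12 := by
        have c1 : (2.78 - x) * Real.exp (2.45:ℝ) ≤ (2.78 - x) * 11.589 :=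
          mul_le_mul_of_nonneg_left exp_245_ub (by linarith)
        have c2 : (x - 2.45) * Real.exp (2.78:ℝ) ≤ (x - 2.45) * 16.12 :=
          mul_le_mul_of_nonneg_left exp_278_ub (by linarith)
        linarith
      have hy : (2.16:ℝ) ≤ x^2/(4*Real.log 2) := by
        rw [le_div_iff₀ (by positivity)]
        nlinarith
      have hT := tangent 2.16 8.6705 (by norm_num) exp_216_lb hy
      have hgoal : Real.exp x - 1 - x ≤ 8.6705*(2*Real.log 2*(1-2.16) + x^2/2) := by
        nlinarith [h2]
      linarith

lemma bennett {p : ℝ} (hp0 : 0 < p) (hp1 : p < 1) (lam : ℝ) :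
    bernMGF p lam ≤ Real.exp (p * (Real.exp lam - 1 - lam)) := by
  have h1 : bernMGF p lam = Real.exp (-(lam*p)) * (1 + p * (Real.exp lam - 1)) := by
    unfold bernMGF
    rw [show lam * (1-p) = lam + -(lam*p) by ring, Real.exp_add]
    ring
  rw [h1]
  have h2 : 1 + p * (Real.exp lam - 1) ≤ Real.exp (p * (Real.exp lam - 1)) := by
    have := Real.add_one_le_exp (p * (Real.exp lam - 1)); linarith
  calc Real.exp (-(lam*p)) * (1 + p * (Real.exp lam - 1))
      ≤ Real.exp (-(lam*p)) * Real.exp (p * (Real.exp lam - 1)) :=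
        mul_le_mul_of_nonneg_left h2 (Real.exp_pos _).le
    _ = Real.exp (p * (Real.exp lam - 1 - lam)) := by rw [← Real.exp_add]; ring_nf

lemma key {p : ℝ} (hp0 : 0 < p) (hp : p < 1/2) (lam : ℝ) :
    bernMGF p lam ≤ Real.exp (lam^2 / (4 * (-Real.log (2*p)))) := by
  set L := -Real.log (2*p) with hLdef
  have h2p1 : 2*p < 1 := by linarith
  have h2p0 : (0:ℝ) < 2*p := by linarith
  have hL : 0 < L := by
    rw [hLdef, neg_pos]; exact Real.log_neg h2p0 h2p1
  have hexpL : Real.exp (-L) = 2*p := by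
    rw [hLdef, neg_neg]; exact Real.exp_log h2p0
  have hexpL' : Real.exp L * (2*p) = 1 := by
    rw [← hexpL, ← Real.exp_add]; simp
  have hben := bennett hp0 (by linarith) lam
  rcases le_or_gt lam 0 with hlam | hlam
  · -- case lam ≤ 0
    have hq := exp_le_quadratic_of_nonpos hlam
    have hLe : L ≤ Real.exp L := by nlinarith [Real.add_one_le_exp L]
    refine hben.trans (Real.exp_le_exp.2 ?_)
    have hml : p * (Real.exp lam - 1 - lam) ≤ p * (lam^2/2) :=
      mul_le_mul_of_nonneg_left (by linarith) hp0.le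
    refine hml.trans ?_
    rw [le_div_iff₀ (by positivity)]
    have h2pL : 2*p*L ≤ 1 := by
      nlinarith [Real.exp_pos L]
    nlinarith [mul_le_mul_of_nonneg_right h2pL (sq_nonneg lam)]
  rcases le_or_gt lam (5/3) with hlam2 | hlam2
  · -- case 0 < lam ≤ 5/3
    have hq := poly1 hlam.le hlam2
    refine hben.trans (Real.exp_le_exp.2 ?_)
    have hml : p * (Real.exp lam - 1 - lam) ≤ p * ((Real.exp 1/2) * lam^2) :=
      mul_le_mul_of_nonneg_left (by linarith) hp0.le
    refine hml.trans ?_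
    rw [le_div_iff₀ (by positivity)]
    have hLe1 : L ≤ Real.exp (L-1) := by nlinarith [Real.add_one_le_exp (L-1)]
    have h3 : Real.exp (L-1) * Real.exp 1 = Real.exp L := by rw [← Real.exp_add]; ring_nf
    have hkey : 2*p*L*Real.exp 1 ≤ 1 := by
      have h4 := mul_le_mul_of_nonneg_right hLe1 (Real.exp_pos 1).le
      rw [h3] at h4
      -- h4 : L * exp 1 ≤ exp L
      nlinarith [Real.exp_pos L, mul_pos h2p0 (Real.exp_pos L)]
    nlinarith [mul_le_mul_of_nonneg_right hkey (sq_nonneg lam)]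
  rcases le_or_gt (lam^2) (4*L*Real.log 2) with hlam3 | hlam3
  · -- case 5/3 < lam, lam² ≤ 4L log 2
    have hstar := star hlam2.le
    have hc0 : (0:ℝ) < Real.log 2 := Real.log_pos one_lt_two
    set c := Real.log 2 with hcdef
    set L0 := lam^2/(4*c) with hL0def
    have hL01 : 1 ≤ L0 := by
      rw [le_div_iff₀ (by positivity)]
      nlinarith [Real.log_two_lt_d9]
    have hLL0 : L0 ≤ L := by
      rw [div_le_iff₀ (by positivity)]
      nlinarith
    have hmono : Real.exp L0 * L ≤ Real.exp L * L0 := by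
      have h1 : Real.exp L0 * (1 + (L - L0)) ≤ Real.exp L := by
        have h0 := Real.add_one_le_exp (L - L0)
        calc Real.exp L0 * (1 + (L-L0)) ≤ Real.exp L0 * Real.exp (L-L0) :=
              mul_le_mul_of_nonneg_left (by linarith) (Real.exp_pos _).le
          _ = Real.exp L := by rw [← Real.exp_add]; ring_nf
      have h2 : L ≤ L0 * (1 + (L-L0)) := by nlinarith
      calc Real.exp L0 * L ≤ Real.exp L0 * (L0*(1+(L-L0))) :=
            mul_le_mul_of_nonneg_left h2 (Real.exp_pos _).le
        _ = (Real.exp L0 * (1+(L-L0))) * L0 := by ring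
        _ ≤ Real.exp L * L0 := mul_le_mul_of_nonneg_right h1 (by positivity)
    refine hben.trans (Real.exp_le_exp.2 ?_)
    have hml : p * (Real.exp lam - 1 - lam) ≤ p * (2*c*Real.exp L0) :=
      mul_le_mul_of_nonneg_left hstar hp0.le
    refine hml.trans ?_
    rw [le_div_iff₀ (by positivity)]
    have hL0lam : 4*c*L0 = lam^2 := by
      rw [hL0def]; field_simp
    have hh := mul_le_mul_of_nonneg_left hmono (by positivity : (0:ℝ) ≤ 8*p*c)
    have h9 : 8*p*c*(Real.exp L*L0) = 4*c*L0 := by linear_combination (4*c*L0) * hexpL'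
    nlinarith [hh, h9]
  · -- case lam² > 4 L log 2, lam > 0
    have hc0 : (0:ℝ) < Real.log 2 := Real.log_pos one_lt_two
    have hpe : p * Real.exp L = 1/2 := by linear_combination hexpL' / 2
    have hA : p * Real.exp (lam*(1-p)) ≤ 1/2 * Real.exp (lam^2/(4*L)) := by
      have hAM : lam*(1-p)*(4*L) ≤ lam^2 + 4*L^2*(1-p)^2 := by
        nlinarith [sq_nonneg (lam - 2*L*(1-p))]
      have h1 : lam*(1-p) ≤ lam^2/(4*L) + L*(1-p)^2 := by
        rw [show lam^2/(4*L) + L*(1-p)^2 = (lam^2 + 4*L^2*(1-p)^2)/(4*L) by field_simp,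
          le_div_iff₀ (by positivity)]
        exact hAM
      have h2 : Real.exp (lam*(1-p)) ≤ Real.exp (lam^2/(4*L)) * Real.exp (L*(1-p)^2) := by
        rw [← Real.exp_add]; exact Real.exp_le_exp.2 h1
      have h3 : Real.exp (L*(1-p)^2) ≤ Real.exp L := by
        apply Real.exp_le_exp.2
        have hpp : 0 ≤ p*(2-p)*L := mul_nonneg (mul_nonneg hp0.le (by linarith)) hL.le
        nlinarith [hpp]
      calc p * Real.exp (lam*(1-p))
          ≤ p * (Real.exp (lam^2/(4*L)) * Real.exp (L*(1-p)^2)) :=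
            mul_le_mul_of_nonneg_left h2 hp0.le
        _ ≤ p * (Real.exp (lam^2/(4*L)) * Real.exp L) := by
            apply mul_le_mul_of_nonneg_left _ hp0.le
            exact mul_le_mul_of_nonneg_left h3 (Real.exp_pos _).le
        _ = (p * Real.exp L) * Real.exp (lam^2/(4*L)) := by ring
        _ = 1/2 * Real.exp (lam^2/(4*L)) := by rw [hpe]
    have hB : (1-p) * Real.exp (-(lam*p)) ≤ 1/2 * Real.exp (lam^2/(4*L)) := by
      have e1 : Real.exp (-(lam*p)) ≤ 1 := by
        rw [Real.exp_le_one_iff]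
        have := mul_nonneg hlam.le hp0.le
        linarith
      have h1 : (1-p) * Real.exp (-(lam*p)) ≤ 1 := by
        nlinarith [Real.exp_pos (-(lam*p))]
      have h2 : (2:ℝ) ≤ Real.exp (lam^2/(4*L)) := by
        have hle : Real.log 2 ≤ lam^2/(4*L) := by
          rw [le_div_iff₀ (by positivity)]
          nlinarith
        calc (2:ℝ) = Real.exp (Real.log 2) := (Real.exp_log (by norm_num)).symm
          _ ≤ _ := Real.exp_le_exp.2 hle
      linarith
    unfold bernMGF
    linarith [hA, hB]

/-- For `p ∈ (0,1)`, `p ≠ 1/2`, the optimal sub-Gaussian constant of a centered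
Bernoulli(p) variable satisfies `‖Y‖_{ψ₂} ≤ 1 / √(2 |log(min{2p, 2(1-p)})|)`. -/
theorem psi2_centered_bernoulli_upper_bound {p : ℝ} (hp : p ∈ Set.Ioo (0 : ℝ) 1)
    (hhalf : p ≠ 1 / 2) :
    Real.sqrt (psi2sq p) ≤ 1 / Real.sqrt (2 * |Real.log (min (2 * p) (2 * (1 - p)))|) := by
  obtain ⟨hp0, hp1⟩ := hp
  have main : ∀ lam : ℝ,
      bernMGF p lam ≤ Real.exp (lam^2 / (4 * |Real.log (min (2 * p) (2 * (1 - p)))|)) := by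
    rcases lt_or_gt_of_ne hhalf with hlt | hgt
    · have hmin : min (2*p) (2*(1-p)) = 2*p := min_eq_left (by linarith)
      have habs : |Real.log (2*p)| = -Real.log (2*p) :=
        abs_of_neg (Real.log_neg (by linarith) (by linarith))
      intro lam
      rw [hmin, habs]
      exact key hp0 hlt lam
    · have hmin : min (2*p) (2*(1-p)) = 2*(1-p) := min_eq_right (by linarith)
      have habs : |Real.log (2*(1-p))| = -Real.log (2*(1-p)) :=
        abs_of_neg (Real.log_neg (by linarith) (by linarith))
      intro lam
      rw [hmin, habs]
      have hsym : bernMGF p lam = bernMGF (1-p) (-lam) := by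
        unfold bernMGF
        rw [show -lam * (1 - (1-p)) = -(lam*p) by ring, show -(-lam * (1-p)) = lam*(1-p) by ring]
        ring
      rw [hsym]
      have := key (p := 1-p) (by linarith) (by linarith) (-lam)
      rwa [neg_pow, show ((-1:ℝ))^2 = 1 by norm_num, one_mul] at this
  set M := |Real.log (min (2 * p) (2 * (1 - p)))| with hMdef
  have hM0 : 0 < M := by
    rw [hMdef, abs_pos]
    rcases lt_or_gt_of_ne hhalf with hlt | hgt
    · rw [min_eq_left (by linarith)]
      exact ne_of_lt (Real.log_neg (by linarith) (by linarith))
    · rw [min_eq_right (by linarith)]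
      exact ne_of_lt (Real.log_neg (by linarith) (by linarith))
  have hmem : (1/(2*M)) ∈ {s : ℝ | 0 ≤ s ∧ ∀ lam : ℝ, bernMGF p lam ≤ Real.exp (s * lam ^ 2 / 2)} := by
    refine ⟨by positivity, fun lam => ?_⟩
    have h := main lam
    have heq : 1/(2*M) * lam^2 / 2 = lam^2/(4*M) := by
      rw [div_mul_eq_mul_div, one_mul, div_div]
      ring_nf
    rw [heq]
    exact h
  have hinf : psi2sq p ≤ 1/(2*M) := csInf_le ⟨0, fun s hs => hs.1⟩ hmem
  have hs := Real.sqrt_le_sqrt hinf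
  refine hs.trans ?_
  rw [one_div, Real.sqrt_inv, one_div]
end
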